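/- Every finite distributive lattice L is the colimit, in the category of small categories, of the diagram of its Boolean intervals and inclusions between them. Concretely: for any two elements x ≤ y in L and any two composites of covering relations from x to y, the induced morphisms x → y in the colimit category agree, so the colimit is a poset isomorphic to L. -/

import Mathlib

open CategoryTheory

namespace FDLColim

open scoped Classical

variable {L : Type} [Fintype L] [DistribLattice L]

/-- Shorthand for "the interval `[a,b]` is Boolean". -/
abbrev IsBool (a b : L) : Prop := ∃ k : ℕ, Nonempty (Set.Icc a b ≃o (Fin k → Bool))

instance uniqueIccSelf (x : L) : Unique (Set.Icc x x) where
  default := ⟨x, le_rfl, le_rfl⟩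
  uniq := fun a => Subtype.ext (le_antisymm a.2.2 a.2.1)

omit [Fintype L] in
lemma bool_self (x : L) : IsBool x x :=
  ⟨0, ⟨{ toEquiv := Equiv.ofUnique _ _,
         map_rel_iff' := fun {a b} => iff_of_true (fun i => i.elim0)
           (le_of_eq ((Subsingleton.elim a b))) }⟩⟩

lemma exists_cover {x y : L} (h : x < y) : ∃ z, x ⋖ z ∧ z ≤ y := by
  letI : LocallyFiniteOrder L := Fintype.toLocallyFiniteOrder
  exact exists_covBy_le_of_lt h

omit [Fintype L] in
lemma bool_cov {x y : L} (h : x ⋖ y) : IsBool x y := by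
  refine ⟨1, ⟨OrderIso.trans ?_ (OrderIso.funUnique (Fin 1) Bool).symm⟩⟩
  exact {
    toFun := fun t => decide (y ≤ t.1)
    invFun := fun b => if b then ⟨y, h.le, le_rfl⟩ else ⟨x, le_rfl, h.le⟩
    left_inv := fun t => by
      rcases (h.wcovBy.eq_or_eq t.2.1 t.2.2) with ht | ht
      · have hy : ¬ y ≤ t.1 := by rw [ht]; exact h.lt.not_ge
        simp only [hy, decide_eq_true_eq, decide_eq_false hy, if_neg Bool.false_ne_true]
        exact (Subtype.ext ht).symm
      · simp only [decide_eq_true (le_of_eq ht.symm), if_pos rfl]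
        exact (Subtype.ext ht).symm
    right_inv := fun b => by
      cases b
      · simp only [if_neg Bool.false_ne_true]
        exact decide_eq_false h.lt.not_ge
      · simp only [if_pos rfl]
        exact decide_eq_true le_rfl
    map_rel_iff' := by
      intro a b
      constructor
      · intro hab
        rcases (h.wcovBy.eq_or_eq a.2.1 a.2.2) with ha | ha
        · show a.1 ≤ b.1
          rw [ha]; exact b.2.1
        · have hd : y ≤ b.1 :=
            of_decide_eq_true (Bool.le_iff_imp.mp hab (decide_eq_true ha.ge))
          show a.1 ≤ b.1
          rw [ha]; exact hd
      · intro hab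
        exact Bool.le_iff_imp.mpr fun hd =>
          decide_eq_true (le_trans (of_decide_eq_true hd) hab) }

section Diamond

variable {x z z' : L} (hz : x ⋖ z) (hz' : x ⋖ z') (hne : z ≠ z')

include hz hz' hne

omit [Fintype L] in
lemma not_le_cov : ¬ z ≤ z' := by
  intro hle
  rcases hz'.wcovBy.eq_or_eq hz.le hle with h | h
  · exact hz.lt.ne' h
  · exact hne h

omit [Fintype L] hne in
lemma mem_diamond {t : L} (ht : t ∈ Set.Icc x (z ⊔ z')) :
    t = x ∨ t = z ∨ t = z' ∨ t = z ⊔ z' := by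
  have h1 : t = (t ⊓ z) ⊔ (t ⊓ z') := by
    rw [← inf_sup_left, inf_eq_left.mpr ht.2]
  have h2 := hz.wcovBy.eq_or_eq (le_inf ht.1 hz.le) inf_le_right
  have h3 := hz'.wcovBy.eq_or_eq (le_inf ht.1 hz'.le) inf_le_right
  rcases h2 with h2 | h2 <;> rcases h3 with h3 | h3 <;> rw [h2, h3] at h1
  · left; rwa [sup_idem] at h1
  · right; right; left; rwa [sup_eq_right.mpr hz'.le] at h1
  · right; left; rwa [sup_eq_left.mpr hz.le] at h1
  · right; right; right; exact h1

omit [Fintype L] in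
lemma inf_cov : z ⊓ z' = x := by
  rcases hz.wcovBy.eq_or_eq (le_inf hz.le hz'.le) inf_le_left with h | h
  · exact h
  · exact absurd (h ▸ inf_le_right) (not_le_cov hz hz' hne)

omit [Fintype L] in
lemma cov_sup_left : z ⋖ z ⊔ z' := by
  have h := covBy_sup_of_inf_covBy_left (a := z') (b := z)
    (by rw [inf_comm, inf_cov hz hz' hne]; exact hz')
  rwa [sup_comm] at h

omit [Fintype L] in
lemma bool_diamond : IsBool x (z ⊔ z') := by
  have hle : ¬ z ≤ z' := not_le_cov hz hz' hne
  have hle' : ¬ z' ≤ z := not_le_cov hz' hz hne.symm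
  have hzx : ¬ z ≤ x := hz.lt.not_ge
  have hz'x : ¬ z' ≤ x := hz'.lt.not_ge
  refine ⟨2, ⟨{
    toFun := fun t i => if i.1 = 0 then decide (z ≤ t.1) else decide (z' ≤ t.1)
    invFun := fun f => ⟨(if f 0 then z else x) ⊔ (if f 1 then z' else x), by
      constructor
      · apply le_sup_of_le_left
        split
        · exact hz.le
        · exact le_rfl
      · apply sup_le
        · split
          · exact le_sup_left
          · exact hz.le.trans le_sup_left
        · split
          · exact le_sup_right
          · exact hz.le.trans le_sup_left⟩
    left_inv := fun t => by
      apply Subtype.ext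
      rcases mem_diamond hz hz' t.2 with h | h | h | h <;>
        simp [h, hzx, hz'x, hle, hle', le_sup_left, le_sup_right,
          sup_eq_left.mpr hz.le, sup_eq_right.mpr hz'.le, Fin.isValue]
    right_inv := fun f => by
      funext i
      fin_cases i <;>
        rcases Bool.eq_false_or_eq_true (f 0) with h0 | h0 <;>
        rcases Bool.eq_false_or_eq_true (f 1) with h1 | h1 <;>
        simp [h0, h1, hzx, hz'x, hle, hle', le_sup_left, le_sup_right,
          sup_eq_left.mpr hz.le, sup_eq_right.mpr hz'.le, sup_idem,
          decide_eq_true_eq, decide_eq_false_iff_not]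
    map_rel_iff' := by
      intro a b
      simp only [Equiv.coe_fn_mk]
      constructor
      · intro hab
        have h0 : z ≤ a.1 → z ≤ b.1 := fun hza => by
          have h : decide (z ≤ a.1) ≤ decide (z ≤ b.1) := by simpa using hab 0
          exact of_decide_eq_true (Bool.le_iff_imp.mp h (decide_eq_true hza))
        have h1 : z' ≤ a.1 → z' ≤ b.1 := fun hza => by
          have h : decide (z' ≤ a.1) ≤ decide (z' ≤ b.1) := by simpa using hab 1
          exact of_decide_eq_true (Bool.le_iff_imp.mp h (decide_eq_true hza))
        show a.1 ≤ b.1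
        have ha : a.1 = (a.1 ⊓ z) ⊔ (a.1 ⊓ z') := by
          rw [← inf_sup_left, inf_eq_left.mpr a.2.2]
        rw [ha]
        apply sup_le
        · rcases hz.wcovBy.eq_or_eq (le_inf a.2.1 hz.le) inf_le_right with h | h
          · rw [h]; exact b.2.1
          · have hza : z ≤ a.1 := h.symm.trans_le inf_le_left
            exact inf_le_right.trans (h0 hza)
        · rcases hz'.wcovBy.eq_or_eq (le_inf a.2.1 hz'.le) inf_le_right with h | h
          · rw [h]; exact b.2.1
          · have hza : z' ≤ a.1 := h.symm.trans_le inf_le_left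
            exact inf_le_right.trans (h1 hza)
      · intro hab
        refine Pi.le_def.mpr fun i => ?_
        split <;>
          exact Bool.le_iff_imp.mpr fun hd =>
            decide_eq_true ((of_decide_eq_true hd).trans (Subtype.coe_le_coe.mpr hab)) }⟩⟩

end Diamond

lemma card_Icc_lt {x y z : L} (hxz : x < z) (hzy : z ≤ y) :
    Fintype.card (Set.Icc z y) < Fintype.card (Set.Icc x y) := by
  apply Set.card_lt_card
  constructor
  · exact Set.Icc_subset_Icc hxz.le le_rfl
  · intro hsub
    exact hxz.not_ge (hsub ⟨le_rfl, hxz.le.trans hzy⟩).1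

section Cat

variable {C : Type*} [Category C]
variable (F : ∀ a b : L, a ≤ b → IsBool a b → (Set.Icc a b ⥤ C))
variable (compat : ∀ (a b c d : L) (hab : a ≤ b) (hcd : c ≤ d)
      (hB : IsBool a b) (hB' : IsBool c d) (hca : c ≤ a) (hbd : b ≤ d),
      (show Monotone (Set.inclusion (Set.Icc_subset_Icc hca hbd)) from
          fun _ _ h => h).functor ⋙ F c d hcd hB' = F a b hab hB)

/-- The object function of the glued functor. -/
def obj (x : L) : C := (F x x le_rfl (bool_self x)).obj ⟨x, le_rfl, le_rfl⟩

include compat in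
lemma obj_eq {a b : L} (hab : a ≤ b) (hB : IsBool a b) {x : L} (hx : x ∈ Set.Icc a b) :
    obj F x = (F a b hab hB).obj ⟨x, hx⟩ :=
  (Functor.congr_obj (compat x x a b le_rfl hab (bool_self x) hB hx.1 hx.2)
    ⟨x, le_rfl, le_rfl⟩).symm

/-- Morphism induced by a Boolean interval containing both endpoints. -/
def mapIn {a b : L} (hab : a ≤ b) (hB : IsBool a b) {x y : L}
    (hx : x ∈ Set.Icc a b) (hy : y ∈ Set.Icc a b) (h : x ≤ y) :
    obj F x ⟶ obj F y :=
  eqToHom (obj_eq F compat hab hB hx) ≫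
    (F a b hab hB).map (homOfLE (show (⟨x, hx⟩ : Set.Icc a b) ≤ ⟨y, hy⟩ from h)) ≫
    eqToHom (obj_eq F compat hab hB hy).symm

lemma mapIn_comp {a b : L} (hab : a ≤ b) (hB : IsBool a b) {x y z : L}
    (hx : x ∈ Set.Icc a b) (hy : y ∈ Set.Icc a b) (hz : z ∈ Set.Icc a b)
    (hxy : x ≤ y) (hyz : y ≤ z) :
    mapIn F compat hab hB hx hy hxy ≫ mapIn F compat hab hB hy hz hyz =
      mapIn F compat hab hB hx hz (hxy.trans hyz) := by
  simp [mapIn, eqToHom_trans_assoc, ← Functor.map_comp_assoc]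

lemma mapIn_mono {a b a' b' : L} (hab : a ≤ b) (hB : IsBool a b)
    (hab' : a' ≤ b') (hB' : IsBool a' b') (ha : a' ≤ a) (hb : b ≤ b')
    {x y : L} (hx : x ∈ Set.Icc a b) (hy : y ∈ Set.Icc a b) (h : x ≤ y) :
    mapIn F compat hab hB hx hy h =
      mapIn F compat hab' hB' (Set.Icc_subset_Icc ha hb hx) (Set.Icc_subset_Icc ha hb hy) h := by
  have hF := (compat a b a' b' hab hab' hB hB' ha hb).symm
  rw [mapIn, Functor.congr_hom hF
    (homOfLE (show (⟨x, hx⟩ : Set.Icc a b) ≤ ⟨y, hy⟩ from h))]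
  rw [mapIn]
  simp only [Functor.comp_map, Monotone.functor, Category.assoc, eqToHom_trans_assoc,
    eqToHom_trans]
  erw [eqToHom_trans_assoc, eqToHom_trans]

/-- The morphism attached to a covering relation. -/
def edge {x z : L} (hz : x ⋖ z) : obj F x ⟶ obj F z :=
  mapIn F compat hz.le (bool_cov hz) (show x ∈ Set.Icc x z from ⟨le_rfl, hz.le⟩)
    (show z ∈ Set.Icc x z from ⟨hz.le, le_rfl⟩) hz.le

lemma edge_comp_diag {x z w : L} (hz : x ⋖ z) (hzw : z ⋖ w) (hB : IsBool x w) :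
    edge F compat hz ≫ edge F compat hzw =
      mapIn F compat (hz.le.trans hzw.le) hB ⟨le_rfl, hz.le.trans hzw.le⟩
        ⟨hz.le.trans hzw.le, le_rfl⟩ (hz.le.trans hzw.le) := by
  rw [edge, edge,
    mapIn_mono F compat hz.le (bool_cov hz) (hz.le.trans hzw.le) hB le_rfl hzw.le,
    mapIn_mono F compat hzw.le (bool_cov hzw) (hz.le.trans hzw.le) hB hz.le le_rfl,
    mapIn_comp]

lemma edge_square {x z z' : L} (hz : x ⋖ z) (hz' : x ⋖ z') (hne : z ≠ z') :
    edge F compat hz ≫ edge F compat (cov_sup_left hz hz' hne) =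
      edge F compat hz' ≫ edge F compat
        (by rw [sup_comm]; exact cov_sup_left hz' hz hne.symm) := by
  rw [edge_comp_diag F compat hz (cov_sup_left hz hz' hne) (bool_diamond hz hz' hne),
    edge_comp_diag F compat hz' _ (bool_diamond hz hz' hne)]

/-- The glued morphism `x ⟶ y`, defined by recursion on covering chains. -/
noncomputable def homLE : ∀ (x y : L), x ≤ y → (obj F x ⟶ obj F y) := fun x y h =>
  if heq : x = y then eqToHom (congrArg (obj F) heq)
  else
    have hlt : x < y := lt_of_le_of_ne h heq
    have hc : ∃ z, x ⋖ z ∧ z ≤ y := exists_cover hlt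
    have h1 : x ⋖ hc.choose := hc.choose_spec.1
    have h2 : hc.choose ≤ y := hc.choose_spec.2
    edge F compat h1 ≫ homLE hc.choose y h2
termination_by x y => Fintype.card (Set.Icc x y)
decreasing_by exact card_Icc_lt hc.choose_spec.1.lt hc.choose_spec.2

lemma homLE_refl (x : L) (h : x ≤ x) : homLE F compat x x h = 𝟙 _ := by
  rw [homLE, dif_pos rfl]
  simp

lemma homLE_unfold {x y : L} (h : x ≤ y) (hlt : x < y) :
    homLE F compat x y h =
      edge F compat (exists_cover hlt).choose_spec.1 ≫
        homLE F compat (exists_cover hlt).choose y (exists_cover hlt).choose_spec.2 := by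
  rw [homLE, dif_neg hlt.ne]

lemma coherence : ∀ (n : ℕ) (x y z : L) (h : x ≤ y) (hz : x ⋖ z) (hzy : z ≤ y),
    Fintype.card (Set.Icc x y) ≤ n →
    homLE F compat x y h = edge F compat hz ≫ homLE F compat z y hzy := by
  intro n
  induction n with
  | zero =>
    intro x y z h hz hzy hcard
    have : 0 < Fintype.card (Set.Icc x y) := Fintype.card_pos_iff.mpr ⟨⟨x, le_rfl, h⟩⟩
    omega
  | succ n ih =>
    intro x y z h hz hzy hcard
    have hlt : x < y := hz.lt.trans_le hzy
    rw [homLE_unfold F compat h hlt]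
    set z₀ := (exists_cover hlt).choose with hz₀def
    have h1 : x ⋖ z₀ := (exists_cover hlt).choose_spec.1
    have h2 : z₀ ≤ y := (exists_cover hlt).choose_spec.2
    by_cases hzz : z₀ = z
    · subst hzz
      rfl
    · skip
      have hwy : z₀ ⊔ z ≤ y := sup_le h2 hzy
      have hcov1 : z₀ ⋖ z₀ ⊔ z := cov_sup_left h1 hz hzz
      have hcov2 : z ⋖ z₀ ⊔ z := by
        rw [sup_comm]; exact cov_sup_left hz h1 (Ne.symm hzz)
      have hcard1 : Fintype.card (Set.Icc z₀ y) ≤ n := by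
        have := card_Icc_lt h1.lt h2
        omega
      have hcard2 : Fintype.card (Set.Icc z y) ≤ n := by
        have := card_Icc_lt hz.lt hzy
        omega
      rw [ih z₀ y (z₀ ⊔ z) h2 hcov1 hwy hcard1,
        ih z y (z₀ ⊔ z) hzy hcov2 hwy hcard2, ← Category.assoc, ← Category.assoc,
        edge_square F compat h1 hz hzz]

lemma homLE_cov {x y z : L} (h : x ≤ y) (hz : x ⋖ z) (hzy : z ≤ y) :
    homLE F compat x y h = edge F compat hz ≫ homLE F compat z y hzy :=
  coherence F compat (Fintype.card (Set.Icc x y)) x y z h hz hzy le_rfl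

lemma homLE_trans : ∀ (n : ℕ) (x y z : L) (hxy : x ≤ y) (hyz : y ≤ z),
    Fintype.card (Set.Icc x y) ≤ n →
    homLE F compat x y hxy ≫ homLE F compat y z hyz =
      homLE F compat x z (hxy.trans hyz) := by
  intro n
  induction n with
  | zero =>
    intro x y z hxy hyz hcard
    have : 0 < Fintype.card (Set.Icc x y) := Fintype.card_pos_iff.mpr ⟨⟨x, le_rfl, hxy⟩⟩
    omega
  | succ n ih =>
    intro x y z hxy hyz hcard
    by_cases heq : x = y
    · subst heq
      rw [homLE_refl, Category.id_comp]
    · have hlt : x < y := lt_of_le_of_ne hxy heq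
      have hc : ∃ w, x ⋖ w ∧ w ≤ y := exists_cover hlt
      have h1 : x ⋖ hc.choose := hc.choose_spec.1
      have h2 : hc.choose ≤ y := hc.choose_spec.2
      rw [homLE_cov F compat hxy h1 h2,
        homLE_cov F compat (hxy.trans hyz) h1 (h2.trans hyz), Category.assoc]
      congr 1
      apply ih
      have := card_Icc_lt h1.lt h2
      omega

lemma homLE_restrict : ∀ (n : ℕ) (a b : L) (hab : a ≤ b) (hB : IsBool a b)
    (x y : L) (hx : x ∈ Set.Icc a b) (hy : y ∈ Set.Icc a b) (h : x ≤ y),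
    Fintype.card (Set.Icc x y) ≤ n →
    homLE F compat x y h = mapIn F compat hab hB hx hy h := by
  intro n
  induction n with
  | zero =>
    intro a b hab hB x y hx hy h hcard
    have : 0 < Fintype.card (Set.Icc x y) := Fintype.card_pos_iff.mpr ⟨⟨x, le_rfl, h⟩⟩
    omega
  | succ n ih =>
    intro a b hab hB x y hx hy h hcard
    by_cases heq : x = y
    · subst heq
      rw [homLE_refl, mapIn]
      rw [show homOfLE (show (⟨x, hx⟩ : Set.Icc a b) ≤ ⟨x, hy⟩ from h) =
          𝟙 (⟨x, hx⟩ : Set.Icc a b) from Subsingleton.elim _ _]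
      simp
    · have hlt : x < y := lt_of_le_of_ne h heq
      obtain ⟨z, hz, hzy⟩ := exists_cover hlt
      have hzmem : z ∈ Set.Icc a b := ⟨hx.1.trans hz.le, hzy.trans hy.2⟩
      rw [homLE_cov F compat h hz hzy]
      have hzc : Fintype.card (Set.Icc z y) ≤ n := by
        have := card_Icc_lt hz.lt hzy
        omega
      rw [ih a b hab hB z y hzmem hy hzy hzc]
      rw [edge, mapIn_mono F compat hz.le (bool_cov hz) hab hB hx.1 (hzy.trans hy.2)]
      rw [mapIn_comp]

end Cat

end FDLColim

open FDLColim in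
/-- A finite distributive lattice `L` is the colimit, in the category of small
categories, of the diagram of its Boolean intervals and inclusions: every
cocone of functors on the Boolean intervals of `L`, compatible with inclusions,
factors uniquely through a functor on `L` itself. -/
theorem finite_distributive_lattice_colimit_of_boolean_intervals
    (L : Type) [Fintype L] [DistribLattice L]
    (C : Type*) [Category C]
    (F : ∀ a b : L, a ≤ b → (∃ k : ℕ, Nonempty (Set.Icc a b ≃o (Fin k → Bool))) →
      (Set.Icc a b ⥤ C))
    (compat : ∀ (a b c d : L) (hab : a ≤ b) (hcd : c ≤ d)
      (hB : ∃ k : ℕ, Nonempty (Set.Icc a b ≃o (Fin k → Bool)))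
      (hB' : ∃ k : ℕ, Nonempty (Set.Icc c d ≃o (Fin k → Bool)))
      (hca : c ≤ a) (hbd : b ≤ d),
      (show Monotone (Set.inclusion (Set.Icc_subset_Icc hca hbd)) from
          fun _ _ h => h).functor ⋙ F c d hcd hB' = F a b hab hB) :
    ∃! G : L ⥤ C, ∀ (a b : L) (hab : a ≤ b)
      (hB : ∃ k : ℕ, Nonempty (Set.Icc a b ≃o (Fin k → Bool))),
      (show Monotone (fun x : Set.Icc a b => (x : L)) from
          fun _ _ h => h).functor ⋙ G = F a b hab hB := by
  classical
  refine ⟨{ obj := obj F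
            map := fun {x y} f => homLE F compat x y (leOfHom f)
            map_id := fun x => homLE_refl F compat x le_rfl
            map_comp := fun {x y z} f g =>
              (homLE_trans F compat (Fintype.card (Set.Icc x y)) x y z
                (leOfHom f) (leOfHom g) le_rfl).symm }, ?_, ?_⟩
  · intro a b hab hB
    refine CategoryTheory.Functor.ext (h_obj := fun t => obj_eq F compat hab hB t.2)
      (h_map := fun t₁ t₂ f => ?_)
    show homLE F compat t₁.1 t₂.1 _ = _
    refine (homLE_restrict F compat (Fintype.card (Set.Icc (t₁ : L) (t₂ : L)))
      a b hab hB t₁.1 t₂.1 t₁.2 t₂.2 _ le_rfl).trans ?_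
    unfold mapIn
    congr 1
  · intro G' hG'
    have hobj : ∀ x : L, G'.obj x = obj F x := fun x =>
      Functor.congr_obj (hG' x x le_rfl (bool_self x)) ⟨x, le_rfl, le_rfl⟩
    have hedge : ∀ (x z : L) (hz : x ⋖ z),
        G'.map (homOfLE hz.le) =
          eqToHom (hobj x) ≫ edge F compat hz ≫ eqToHom (hobj z).symm := by
      intro x z hz
      have hF := hG' x z hz.le (bool_cov hz)
      have h2 := Functor.congr_hom hF
        (homOfLE (show (⟨x, le_rfl, hz.le⟩ : Set.Icc x z) ≤ ⟨z, hz.le, le_rfl⟩ from hz.le))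
      simp only [Functor.comp_map, Monotone.functor] at h2
      rw [edge, mapIn]
      refine h2.trans ?_
      simp [eqToHom_trans, eqToHom_trans_assoc]
    have hmap : ∀ (n : ℕ) (x y : L) (h : x ≤ y), Fintype.card (Set.Icc x y) ≤ n →
        G'.map (homOfLE h) =
          eqToHom (hobj x) ≫ homLE F compat x y h ≫ eqToHom (hobj y).symm := by
      intro n
      induction n with
      | zero =>
        intro x y h hcard
        have : 0 < Fintype.card (Set.Icc x y) := Fintype.card_pos_iff.mpr ⟨⟨x, le_rfl, h⟩⟩
        omega
      | succ n ih =>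
        intro x y h hcard
        by_cases heq : x = y
        · subst heq
          rw [homLE_refl]
          rw [show homOfLE h = 𝟙 x from Subsingleton.elim _ _]
          simp
        · have hlt : x < y := lt_of_le_of_ne h heq
          obtain ⟨z, hz, hzy⟩ := exists_cover hlt
          rw [show homOfLE h = homOfLE hz.le ≫ homOfLE hzy from Subsingleton.elim _ _]
          rw [Functor.map_comp, hedge x z hz,
            ih z y hzy (by have := card_Icc_lt hz.lt hzy; omega),
            homLE_cov F compat h hz hzy]
          simp
    refine CategoryTheory.Functor.ext (h_obj := fun u => hobj u)
      (h_map := fun u v f => ?_)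
    rw [show f = homOfLE (leOfHom f) from Subsingleton.elim _ _]
    exact hmap (Fintype.card (Set.Icc u v)) u v (leOfHom f) le_rfl
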